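/- Let Λ be an even, nondegenerate lattice of rank at least 3 containing the hyperbolic plane U as an orthogonal direct summand, let c₁ ∈ Λ, and let r be a nonzero integer. Suppose that for every prime q dividing r there exists x_q ∈ Λ with B(x_q, x_q) = 0 and q ∤ B(c₁, x_q). Then there exists x ∈ Λ with B(x, x) = 0 and gcd(r, B(c₁, x)) = 1. (This is the combination step in Step 2 of the proof of Theorem 4.9, which the paper deduces from weak approximation on the quadric x² = 0: the sets U_q = {x ∈ X(ℤ_q) : x·c₁ ∈ ℤ_q^×} are nonempty open subsets, and density of X(ℤ) in ∏_q X(ℤ_q) produces a simultaneous integral solution.) -/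

import Mathlib

/-- Factor a nonzero natural `n = c * d` where all primes of `c` divide `m`
and `d` is coprime to `m`. -/
lemma aux_split (m : ℕ) (n : ℕ) (hn : n ≠ 0) :
    ∃ c d : ℕ, n = c * d ∧ (∀ p : ℕ, p.Prime → p ∣ c → p ∣ m) ∧ Nat.Coprime d m := by
  induction n using Nat.strong_induction_on with
  | _ n ih =>
    by_cases h : Nat.Coprime n m
    · exact ⟨1, n, (one_mul n).symm, fun p hp hpc => absurd (Nat.eq_one_of_dvd_one hpc) hp.ne_one, h⟩
    · obtain ⟨p, hp, hpd⟩ := Nat.exists_prime_and_dvd h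
      have hpn : p ∣ n := hpd.trans (Nat.gcd_dvd_left _ _)
      have hpm : p ∣ m := hpd.trans (Nat.gcd_dvd_right _ _)
      obtain ⟨k, hk⟩ := hpn
      have hk0 : k ≠ 0 := by rintro rfl; simp at hk; exact hn hk
      have hklt : k < n := by
        rw [hk]; exact lt_mul_of_one_lt_left (Nat.pos_of_ne_zero hk0) hp.one_lt
      obtain ⟨c, d, hcd, hc, hd⟩ := ih k hklt hk0
      exact ⟨p * c, d, by rw [hk, hcd]; ring,
        fun q hq hqc => by
          rcases (Nat.Prime.dvd_mul hq).mp hqc with h1 | h2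
          · exact ((Nat.prime_dvd_prime_iff_eq hq hp).mp h1) ▸ hpm
          · exact hc q hq h2, hd⟩

/-- Pull a common factor `k` out of a sum of scalar multiples. -/
lemma aux_sum_factor {Λ : Type*} [AddCommGroup Λ] (k : ℤ) (T : Finset ℕ)
    (g : ℕ → ℤ) (w : ℕ → Λ) (h : ∀ j ∈ T, k ∣ g j) :
    ∃ z : Λ, ∑ j ∈ T, g j • w j = k • z := by
  classical
  induction T using Finset.induction_on with
  | empty => exact ⟨0, by simp⟩
  | insert a T' hnotmem ih =>
    obtain ⟨z, hz⟩ := ih (fun j hj => h j (Finset.mem_insert_of_mem hj))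
    obtain ⟨t, ht⟩ := h _ (Finset.mem_insert_self _ _)
    refine ⟨t • w a + z, ?_⟩
    rw [Finset.sum_insert hnotmem, hz, ht, zsmul_add, mul_zsmul]

/-- The key mod-`q` congruence for the isotropic family value. -/
lemma aux_congr {Λ : Type*} [AddCommGroup Λ] [Module ℤ Λ]
    (B : Λ →ₗ[ℤ] Λ →ₗ[ℤ] ℤ) (hB_symm : ∀ x y : Λ, B x y = B y x)
    (c₁ : Λ) (n : Λ → ℤ) (hn : ∀ v : Λ, 2 * n v = B v v)
    (q lam mu : ℤ) (f y₀ z' z : Λ) :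
    q ∣ (B (lam • f + q • z') (mu • y₀ + q • z) * B c₁ (mu • y₀ + q • z)
          - n (mu • y₀ + q • z) * B c₁ (lam • f + q • z'))
        - lam * mu ^ 2 * (B f y₀ * B c₁ y₀ - n y₀ * B c₁ f) := by
  have h1 : B (lam • f + q • z') (mu • y₀ + q • z)
      = lam * mu * B f y₀ + q * (lam * B f z + mu * B z' y₀ + q * B z' z) := by
    simp [map_add, map_smul, smul_eq_mul]; ring
  have h2 : B c₁ (mu • y₀ + q • z) = mu * B c₁ y₀ + q * B c₁ z := by
    simp [map_add, map_smul, smul_eq_mul]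
  have h3 : B c₁ (lam • f + q • z') = lam * B c₁ f + q * B c₁ z' := by
    simp [map_add, map_smul, smul_eq_mul]
  have h4 : n (mu • y₀ + q • z) = mu ^ 2 * n y₀ + q * (mu * B y₀ z + q * n z) := by
    apply mul_left_cancel₀ (two_ne_zero (α := ℤ))
    rw [hn]
    have expand : B (mu • y₀ + q • z) (mu • y₀ + q • z)
        = mu * mu * B y₀ y₀ + q * mu * B y₀ z + mu * q * B z y₀ + q * q * B z z := by
      simp [map_add, map_smul, smul_eq_mul]; ring
    rw [expand]
    linear_combination (-(mu ^ 2)) * (hn y₀) + (-(q ^ 2)) * (hn z) + (mu * q) * (hB_symm z y₀)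
  rw [h1, h2, h3, h4]
  refine ⟨lam * mu * B f y₀ * B c₁ z
      + mu * B c₁ y₀ * (lam * B f z + mu * B z' y₀ + q * B z' z)
      + q * (lam * B f z + mu * B z' y₀ + q * B z' z) * B c₁ z
      - mu ^ 2 * n y₀ * B c₁ z'
      - lam * B c₁ f * (mu * B y₀ z + q * n z)
      - q * (mu * B y₀ z + q * n z) * B c₁ z', ?_⟩
  ring

/-- Combination step (weak approximation) in Step 2 of the proof of
Theorem 4.9: per-prime isotropic solutions combine to an isotropic vector `x`
with `gcd(r, B(c₁,x)) = 1`. -/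
theorem stmt_8
    (Λ : Type*) [AddCommGroup Λ] [Module ℤ Λ] [Module.Free ℤ Λ] [Module.Finite ℤ Λ]
    (B : Λ →ₗ[ℤ] Λ →ₗ[ℤ] ℤ)
    (hB_symm : ∀ x y : Λ, B x y = B y x)
    (hB_even : ∀ x : Λ, (2 : ℤ) ∣ B x x)
    (hB_nondeg : ∀ x : Λ, (∀ y : Λ, B x y = 0) → x = 0)
    (hrank : 3 ≤ Module.finrank ℤ Λ)
    (f₁ f₂ : Λ) (Λ' : Submodule ℤ Λ)
    (hf₁ : B f₁ f₁ = 0) (hf₂ : B f₂ f₂ = 0) (hf₁f₂ : B f₁ f₂ = 1)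
    (horth : ∀ x ∈ Λ', B f₁ x = 0 ∧ B f₂ x = 0)
    (hcompl : IsCompl (Submodule.span ℤ ({f₁, f₂} : Set Λ)) Λ')
    (c₁ : Λ) (r : ℤ) (hr : r ≠ 0)
    (hsol : ∀ q : ℕ, q.Prime → (q : ℤ) ∣ r →
      ∃ x : Λ, B x x = 0 ∧ ¬ (q : ℤ) ∣ B c₁ x) :
    ∃ x : Λ, B x x = 0 ∧ Int.gcd r (B c₁ x) = 1 := by
  classical
  -- the half-value of the quadratic form
  set n : Λ → ℤ := fun v => B v v / 2 with hn_def
  have hn : ∀ v : Λ, 2 * n v = B v v := fun v => Int.mul_ediv_cancel' (hB_even v)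
  have hsymm21 : B f₂ f₁ = 1 := by rw [hB_symm]; exact hf₁f₂
  -- decomposition of arbitrary vectors
  have hdecomp : ∀ x : Λ, ∃ a b : ℤ, ∃ v, v ∈ Λ' ∧ x = a • f₁ + b • f₂ + v := by
    intro x
    have hx : x ∈ (Submodule.span ℤ ({f₁, f₂} : Set Λ) ⊔ Λ') := by
      rw [hcompl.codisjoint.eq_top]; trivial
    obtain ⟨u, hu, v, hv, huv⟩ := Submodule.mem_sup.mp hx
    obtain ⟨a, b, hab⟩ := Submodule.mem_span_pair.mp hu
    refine ⟨a, b, v, hv, ?_⟩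
    rw [← huv, ← hab]
    simp only [← Int.cast_smul_eq_zsmul ℤ, Int.cast_id]
  -- a vector in Λ' with nonzero square
  obtain ⟨w₀, hw₀mem, hw₀⟩ : ∃ w, w ∈ Λ' ∧ B w w ≠ 0 := by
    have hne : Λ' ≠ ⊥ := by
      intro hbot
      have hsp : Submodule.span ℤ ({f₁, f₂} : Set Λ) = ⊤ := by
        have h2 := hcompl.codisjoint
        rw [hbot] at h2
        exact codisjoint_bot.mp h2
      have h3 := rank_span_le (R := ℤ) ({f₁, f₂} : Set Λ)
      rw [hsp] at h3
      have h4 : (Cardinal.mk ({f₁, f₂} : Set Λ)) ≤ 2 := by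
        refine (Cardinal.mk_insert_le).trans ?_
        rw [Cardinal.mk_singleton]
        norm_num
      have h5 : Module.rank ℤ Λ ≤ 2 := by
        rw [← rank_top ℤ Λ]
        exact h3.trans h4
      have h6 : Module.finrank ℤ Λ ≤ 2 := by
        apply Module.finrank_le_of_rank_le
        exact_mod_cast h5
      omega
    obtain ⟨w, hwmem, hwne⟩ := Submodule.exists_mem_ne_zero_of_ne_bot hne
    have hy : ∃ y : Λ, B w y ≠ 0 := by
      by_contra hcon
      push_neg at hcon
      exact hwne (hB_nondeg w hcon)
    obtain ⟨y, hy⟩ := hy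
    obtain ⟨a, b, v, hv, hyeq⟩ := hdecomp y
    have hwf₁ : B w f₁ = 0 := by rw [hB_symm]; exact (horth w hwmem).1
    have hwf₂ : B w f₂ = 0 := by rw [hB_symm]; exact (horth w hwmem).2
    have hwv : B w v ≠ 0 := by
      intro h0
      apply hy
      rw [hyeq]
      simp [map_add, map_smul, smul_eq_mul, hwf₁, hwf₂, h0]
    by_cases h1 : B w w ≠ 0
    · exact ⟨w, hwmem, h1⟩
    by_cases h2 : B v v ≠ 0
    · exact ⟨v, hv, h2⟩
    push_neg at h1 h2
    refine ⟨w + v, Λ'.add_mem hwmem hv, ?_⟩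
    have : B (w + v) (w + v) = 2 * B w v := by
      simp [map_add, h1, h2, hB_symm v w]
      ring
    rw [this]
    exact mul_ne_zero two_ne_zero hwv
  -- the per-prime selection
  have hsel : ∀ q : ℕ, q.Prime → (q : ℤ) ∣ r →
      (∃ y : Λ, ¬ (q : ℤ) ∣ (B f₁ y * B c₁ y - n y * B c₁ f₁)) ∨
      (∃ y : Λ, ¬ (q : ℤ) ∣ (B f₂ y * B c₁ y - n y * B c₁ f₂)) := by
    intro q hq hqr
    by_contra hcon
    push_neg at hcon
    obtain ⟨h1, h2⟩ := hcon
    obtain ⟨x₀, -, hx₀⟩ := hsol q hq hqr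
    apply hx₀
    have hnf₁ : n f₁ = 0 := by have := hn f₁; rw [hf₁] at this; omega
    have hnf₂ : n f₂ = 0 := by have := hn f₂; rw [hf₂] at this; omega
    have hA : (q : ℤ) ∣ B c₁ f₁ := by
      have h := h2 f₁
      rw [hsymm21, hnf₁] at h
      simpa using h
    have hC : (q : ℤ) ∣ B c₁ f₂ := by
      have h := h1 f₂
      rw [hf₁f₂, hnf₂] at h
      simpa using h
    have hL : ∀ v ∈ Λ', (q : ℤ) ∣ B c₁ v := by
      intro v hv
      have h := h1 (f₂ + v)
      have e1 : B f₁ (f₂ + v) = 1 := by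
        rw [map_add, hf₁f₂, (horth v hv).1, add_zero]
      have e2 : n (f₂ + v) = n v := by
        have hBv : B (f₂ + v) (f₂ + v) = B v v := by
          have hvf₂ : B v f₂ = 0 := by rw [hB_symm]; exact (horth v hv).2
          simp [map_add, hf₂, (horth v hv).2, hvf₂]
        have h2n := hn (f₂ + v)
        rw [hBv, ← hn v] at h2n
        omega
      have e3 : B c₁ (f₂ + v) = B c₁ f₂ + B c₁ v := map_add _ _ _
      rw [e1, e2, e3, one_mul] at h
      have h' := (h.add (dvd_mul_of_dvd_right hA (n v))).add (dvd_neg.mpr hC)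
      have : B c₁ f₂ + B c₁ v - n v * B c₁ f₁ + n v * B c₁ f₁ + -(B c₁ f₂) = B c₁ v := by ring
      rwa [this] at h'
    obtain ⟨a, b, v₀, hv₀, hx₀eq⟩ := hdecomp x₀
    rw [hx₀eq]
    have hexp : B c₁ (a • f₁ + b • f₂ + v₀)
        = a * B c₁ f₁ + b * B c₁ f₂ + B c₁ v₀ := by
      simp [map_add, map_smul, smul_eq_mul]
    rw [hexp]
    exact dvd_add (dvd_add (hA.mul_left a) (hC.mul_left b)) (hL v₀ hv₀)
  -- prime factors of r
  set ps : Finset ℕ := r.natAbs.primeFactors with hps_def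
  have hpsfact : ∀ q ∈ ps, q.Prime ∧ (q : ℤ) ∣ r := by
    intro q hq
    rw [hps_def, Nat.mem_primeFactors] at hq
    exact ⟨hq.1, (Int.natCast_dvd_natCast.mpr hq.2.1).trans (Int.natAbs_dvd.mpr dvd_rfl)⟩
  set S₁ : Finset ℕ :=
    ps.filter (fun q => ∃ y : Λ, ¬ (q : ℤ) ∣ (B f₁ y * B c₁ y - n y * B c₁ f₁)) with hS₁_def
  set S₂ : Finset ℕ :=
    ps.filter (fun q => ¬ ∃ y : Λ, ¬ (q : ℤ) ∣ (B f₁ y * B c₁ y - n y * B c₁ f₁)) with hS₂_def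
  have hS₁ps : S₁ ⊆ ps := Finset.filter_subset _ _
  have hS₂ps : S₂ ⊆ ps := Finset.filter_subset _ _
  have hS₁S₂ : ∀ q ∈ ps, q ∈ S₁ ∨ q ∈ S₂ := by
    intro q hq
    by_cases h : ∃ y : Λ, ¬ (q : ℤ) ∣ (B f₁ y * B c₁ y - n y * B c₁ f₁)
    · exact Or.inl (Finset.mem_filter.mpr ⟨hq, h⟩)
    · exact Or.inr (Finset.mem_filter.mpr ⟨hq, h⟩)
  have hS₁S₂disj : ∀ q : ℕ, ¬ (q ∈ S₁ ∧ q ∈ S₂) := by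
    rintro q ⟨h1, h2⟩
    exact (Finset.mem_filter.mp h2).2 (Finset.mem_filter.mp h1).2
  -- witnesses
  have hwit : ∀ q : ℕ, ∃ y : Λ,
      (q ∈ S₁ → ¬ (q : ℤ) ∣ (B f₁ y * B c₁ y - n y * B c₁ f₁)) ∧
      (q ∈ S₂ → ¬ (q : ℤ) ∣ (B f₂ y * B c₁ y - n y * B c₁ f₂)) := by
    intro q
    by_cases hq : q ∈ ps
    · by_cases h : ∃ y : Λ, ¬ (q : ℤ) ∣ (B f₁ y * B c₁ y - n y * B c₁ f₁)
      · obtain ⟨y, hy⟩ := h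
        refine ⟨y, fun _ => hy, fun hq2 => absurd ⟨y, hy⟩ (Finset.mem_filter.mp hq2).2⟩
      · have hψ := (hsel q (hpsfact q hq).1 (hpsfact q hq).2).resolve_left h
        obtain ⟨y, hy⟩ := hψ
        exact ⟨y, fun hq1 => absurd (Finset.mem_filter.mp hq1).2 h, fun _ => hy⟩
    · exact ⟨0, fun hq1 => absurd (hS₁ps hq1) hq, fun hq2 => absurd (hS₂ps hq2) hq⟩
  choose Y hY₁ hY₂ using hwit
  -- products of the two classes of primes
  set m₁ : ℕ := ∏ q ∈ S₁, q with hm₁_def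
  set m₂ : ℕ := ∏ q ∈ S₂, q with hm₂_def
  have hprime_ps : ∀ q ∈ ps, q.Prime := fun q hq => (hpsfact q hq).1
  have hnotdvd : ∀ (T : Finset ℕ), T ⊆ ps → ∀ q : ℕ, q.Prime → q ∉ T →
      ¬ q ∣ ∏ j ∈ T, j := by
    intro T hT q hq hqT hdvd
    obtain ⟨j, hjT, hqj⟩ := (Nat.Prime.prime hq).exists_mem_finset_dvd hdvd
    have : q = j := (Nat.prime_dvd_prime_iff_eq hq (hprime_ps j (hT hjT))).mp hqj
    exact hqT (this ▸ hjT)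
  -- factor n w₀
  have hn₀ : n w₀ ≠ 0 := fun h => hw₀ (by rw [← hn w₀, h, mul_zero])
  obtain ⟨cN, dN, hcdN, hcm, hdm⟩ := aux_split m₁ (n w₀).natAbs (Int.natAbs_ne_zero.mpr hn₀)
  set c : ℤ := (cN : ℤ) with hc_def
  set d : ℤ := Int.sign (n w₀) * (dN : ℤ) with hd_def
  have hcdn : c * d = n w₀ := by
    have : c * d = Int.sign (n w₀) * ((cN * dN : ℕ) : ℤ) := by
      rw [hc_def, hd_def]; push_cast; ring
    rw [this, ← hcdN, Int.sign_mul_natAbs]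
  -- the seed vector e
  have hof₁ : B f₁ w₀ = 0 := (horth w₀ hw₀mem).1
  have hof₂ : B f₂ w₀ = 0 := (horth w₀ hw₀mem).2
  have hof₁' : B w₀ f₁ = 0 := by rw [hB_symm]; exact hof₁
  have hof₂' : B w₀ f₂ = 0 := by rw [hB_symm]; exact hof₂
  set e : Λ := (-((m₂ : ℤ) ^ 2 * d)) • f₁ + ((m₁ : ℤ) ^ 2 * c) • f₂
      + ((m₁ : ℤ) * (m₂ : ℤ)) • w₀ with he_def
  have hBee : B e e = 0 := by
    have hexp : B e e = 2 * (-((m₂ : ℤ) ^ 2 * d)) * ((m₁ : ℤ) ^ 2 * c)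
        + ((m₁ : ℤ) * (m₂ : ℤ)) * ((m₁ : ℤ) * (m₂ : ℤ)) * B w₀ w₀ := by
      rw [he_def]
      simp [map_add, map_smul, smul_eq_mul, hf₁, hf₂, hf₁f₂, hsymm21,
        hof₁, hof₂, hof₁', hof₂']
      ring
    rw [hexp, ← hn w₀]
    linear_combination (-(2 * (m₁ : ℤ) ^ 2 * (m₂ : ℤ) ^ 2)) * hcdn
  have hBc₁e : B c₁ e = -((m₂ : ℤ) ^ 2 * d) * B c₁ f₁ + ((m₁ : ℤ) ^ 2 * c) * B c₁ f₂
      + ((m₁ : ℤ) * (m₂ : ℤ)) * B c₁ w₀ := by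
    rw [he_def]; simp [map_add, map_smul, smul_eq_mul]
  -- the CRT-combined vector y
  set y : Λ := ∑ j ∈ ps, ((∏ i ∈ ps.erase j, i : ℕ) : ℤ) • Y j with hy_def
  -- the final vector x
  refine ⟨(B e y) • y - (n y) • e, ?_, ?_⟩
  · -- isotropy
    have h1 : B ((B e y) • y - (n y) • e) ((B e y) • y - (n y) • e)
        = B e y * B e y * B y y - B e y * n y * B y e
          - n y * B e y * B e y + n y * n y * B e e := by
      simp [map_sub, map_smul, smul_eq_mul]
      ring
    rw [h1, hBee, hB_symm y e]
    linear_combination (-(B e y * B e y)) * hn y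
  · -- gcd
    by_contra hg
    obtain ⟨p, hp, hpdvd⟩ := Nat.exists_prime_and_dvd hg
    have hpr : p ∣ r.natAbs := hpdvd.trans (Nat.gcd_dvd_left _ _)
    have hpV : (p : ℤ) ∣ B c₁ ((B e y) • y - (n y) • e) := by
      rw [Int.natCast_dvd]
      exact hpdvd.trans (Nat.gcd_dvd_right _ _)
    have hpps : p ∈ ps := by
      rw [hps_def]
      exact Nat.mem_primeFactors.mpr ⟨hp, hpr, Int.natAbs_ne_zero.mpr hr⟩
    have hVx : B c₁ ((B e y) • y - (n y) • e) = B e y * B c₁ y - n y * B c₁ e := by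
      simp [map_sub, map_smul, smul_eq_mul]
    rw [hVx] at hpV
    -- decompose y
    have hmu : ¬ (p : ℤ) ∣ ((∏ i ∈ ps.erase p, i : ℕ) : ℤ) := by
      rw [Int.natCast_dvd_natCast]
      exact hnotdvd (ps.erase p) (Finset.erase_subset _ _) p hp (Finset.notMem_erase _ _)
    obtain ⟨z, hz⟩ : ∃ z : Λ, y = ((∏ i ∈ ps.erase p, i : ℕ) : ℤ) • Y p + (p : ℤ) • z := by
      have hsplit := Finset.add_sum_erase ps
        (fun j => ((∏ i ∈ ps.erase j, i : ℕ) : ℤ) • Y j) hpps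
      obtain ⟨z, hz'⟩ := aux_sum_factor (p : ℤ) (ps.erase p)
        (fun j => ((∏ i ∈ ps.erase j, i : ℕ) : ℤ)) Y
        (fun j hj => by
          rw [Int.natCast_dvd_natCast]
          exact Finset.dvd_prod_of_mem _ (Finset.mem_erase.mpr
            ⟨fun hpj => (Finset.mem_erase.mp hj).1 hpj.symm, hpps⟩))
      exact ⟨z, by rw [hy_def, ← hsplit, hz']⟩
    have hpint : Prime (p : ℤ) := Nat.prime_iff_prime_int.mp hp
    -- case split on which family works at p
    rcases hS₁S₂ p hpps with hpS | hpS
    · -- seed is (essentially) f₁ mod p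
      have hpm₁ : p ∣ m₁ := Finset.dvd_prod_of_mem _ hpS
      obtain ⟨t, ht⟩ := hpm₁
      have hm₁cast : (m₁ : ℤ) = (p : ℤ) * (t : ℤ) := by exact_mod_cast congrArg Nat.cast ht
      have he' : e = (-((m₂ : ℤ) ^ 2 * d)) • f₁
          + (p : ℤ) • (((t : ℤ) * (m₁ : ℤ) * c) • f₂ + ((t : ℤ) * (m₂ : ℤ)) • w₀) := by
        rw [he_def, zsmul_add, ← mul_zsmul, ← mul_zsmul, add_assoc]
        congr 2
        · congr 1; rw [hm₁cast]; ring
        · congr 1; rw [hm₁cast]; ring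
      have hkey := aux_congr B hB_symm c₁ n hn (p : ℤ) (-((m₂ : ℤ) ^ 2 * d))
        ((∏ i ∈ ps.erase p, i : ℕ) : ℤ) f₁ (Y p)
        (((t : ℤ) * (m₁ : ℤ) * c) • f₂ + ((t : ℤ) * (m₂ : ℤ)) • w₀) z
      rw [← he', ← hz] at hkey
      have hdvd2 : (p : ℤ) ∣ (-((m₂ : ℤ) ^ 2 * d)) * ((∏ i ∈ ps.erase p, i : ℕ) : ℤ) ^ 2
          * (B f₁ (Y p) * B c₁ (Y p) - n (Y p) * B c₁ f₁) := (dvd_sub_right hpV).mp hkey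
      have hpm₂ : ¬ p ∣ m₂ := by
        rw [hm₂_def]
        exact hnotdvd S₂ hS₂ps p hp (fun h => hS₁S₂disj p ⟨hpS, h⟩)
      have hpd : ¬ (p : ℤ) ∣ d := by
        intro hdvd
        have hdN : p ∣ dN := by
          have h1 := Int.natCast_dvd.mp hdvd
          rwa [hd_def, Int.natAbs_mul, Int.natAbs_sign_of_ne_zero hn₀, one_mul,
            Int.natAbs_natCast] at h1
        have := Nat.dvd_gcd hdN (Finset.dvd_prod_of_mem (fun q => q) hpS)
        rw [Nat.Coprime.gcd_eq_one hdm] at this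
        exact hp.ne_one (Nat.eq_one_of_dvd_one this)
      have hplam : ¬ (p : ℤ) ∣ (-((m₂ : ℤ) ^ 2 * d)) := by
        rw [dvd_neg]
        intro hdvd
        rcases hpint.dvd_mul.mp hdvd with h | h
        · exact hpm₂ (Int.natCast_dvd_natCast.mp (hpint.dvd_of_dvd_pow h))
        · exact hpd h
      rcases hpint.dvd_mul.mp hdvd2 with h | h
      · rcases hpint.dvd_mul.mp h with h' | h'
        · exact hplam h'
        · exact hmu (hpint.dvd_of_dvd_pow h')
      · exact hY₁ p hpS h
    · -- seed is (essentially) f₂ mod p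
      have hpm₂ : p ∣ m₂ := Finset.dvd_prod_of_mem _ hpS
      obtain ⟨t, ht⟩ := hpm₂
      have hm₂cast : (m₂ : ℤ) = (p : ℤ) * (t : ℤ) := by exact_mod_cast congrArg Nat.cast ht
      have he' : e = ((m₁ : ℤ) ^ 2 * c) • f₂
          + (p : ℤ) • ((-((t : ℤ) * (m₂ : ℤ) * d)) • f₁ + ((t : ℤ) * (m₁ : ℤ)) • w₀) := by
        rw [he_def, zsmul_add, ← mul_zsmul, ← mul_zsmul,
          show -((m₂ : ℤ) ^ 2 * d) = (p : ℤ) * (-((t : ℤ) * (m₂ : ℤ) * d)) by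
            rw [hm₂cast]; ring,
          show (m₁ : ℤ) * (m₂ : ℤ) = (p : ℤ) * ((t : ℤ) * (m₁ : ℤ)) by
            rw [hm₂cast]; ring]
        abel
      have hkey := aux_congr B hB_symm c₁ n hn (p : ℤ) ((m₁ : ℤ) ^ 2 * c)
        ((∏ i ∈ ps.erase p, i : ℕ) : ℤ) f₂ (Y p)
        ((-((t : ℤ) * (m₂ : ℤ) * d)) • f₁ + ((t : ℤ) * (m₁ : ℤ)) • w₀) z
      rw [← he', ← hz] at hkey
      have hdvd2 : (p : ℤ) ∣ ((m₁ : ℤ) ^ 2 * c) * ((∏ i ∈ ps.erase p, i : ℕ) : ℤ) ^ 2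
          * (B f₂ (Y p) * B c₁ (Y p) - n (Y p) * B c₁ f₂) := (dvd_sub_right hpV).mp hkey
      have hpm₁ : ¬ p ∣ m₁ := by
        rw [hm₁_def]
        exact hnotdvd S₁ hS₁ps p hp (fun h => hS₁S₂disj p ⟨h, hpS⟩)
      have hpc : ¬ (p : ℤ) ∣ c := by
        intro hdvd
        have hcN : p ∣ cN := by
          have h1 := Int.natCast_dvd.mp hdvd
          rwa [hc_def, Int.natAbs_natCast] at h1
        exact hpm₁ (hcm p hp hcN)
      have hplam : ¬ (p : ℤ) ∣ ((m₁ : ℤ) ^ 2 * c) := by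
        intro hdvd
        rcases hpint.dvd_mul.mp hdvd with h | h
        · exact hpm₁ (Int.natCast_dvd_natCast.mp (hpint.dvd_of_dvd_pow h))
        · exact hpc h
      rcases hpint.dvd_mul.mp hdvd2 with h | h
      · rcases hpint.dvd_mul.mp h with h' | h'
        · exact hplam h'
        · exact hmu (hpint.dvd_of_dvd_pow h')
      · exact hY₂ p hpS h
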